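/- arXiv:2408.02972 — 2 statements merged into one kernel-verified Lean document; each statement's English description precedes it below -/
import Mathlib

section
/- Let α > 1 be a real algebraic number with minimal polynomial f(x) = a_d x^d + ⋯ + a_1 x + a_0 ∈ ℤ[x], let L(α) = Σ_{j=0}^d |a_j| and L̃(α) = |Σ_{j=0}^d a_j|. Let ξ, η be real with L̃(α)|η| < 1 and set δ = (1 − |η|·L̃(α))/L(α). Write ξα^n = A_n + η + ε_n with A_n ∈ ℤ and |ε_n| ≤ 1/2. If ‖ξα^{n+i} − η‖ < δ for all i = 0, 1, …, d, then a_d A_{n+d} + a_{d−1} A_{n+d−1} + ⋯ + a_0 A_n = 0. -/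
/-- If `α > 1` is a root of the irreducible integer polynomial
`f = a_d x^d + ⋯ + a_0` (its minimal polynomial), `L̃|η| < 1`, `δ = (1 − |η| L̃)/L`, and
`ξ α^{n+i} = A_{n+i} + η + ε_{n+i}` with `|ε_{n+i}| < δ` for `i = 0,…,d`, then
`Σ a_i A_{n+i} = 0`. -/
theorem nearest_int_parts_satisfy_recurrence (α : ℝ) (hα : 1 < α)
    (d : ℕ) (hd : 1 ≤ d) (a : ℕ → ℤ) (had : a d ≠ 0)
    (hmin : Irreducible (∑ i ∈ Finset.range (d + 1), Polynomial.C (a i) * Polynomial.X ^ i))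
    (hroot : ∑ i ∈ Finset.range (d + 1), (a i : ℝ) * α ^ i = 0)
    (ξ η : ℝ)
    (hη : ((|∑ i ∈ Finset.range (d + 1), a i| : ℤ) : ℝ) * |η| < 1)
    (δ : ℝ)
    (hδ : δ = (1 - |η| * ((|∑ i ∈ Finset.range (d + 1), a i| : ℤ) : ℝ)) /
        (∑ i ∈ Finset.range (d + 1), ((|a i| : ℤ) : ℝ)))
    (A : ℕ → ℤ) (ε : ℕ → ℝ)
    (hdecomp : ∀ m : ℕ, ξ * α ^ m = (A m : ℝ) + η + ε m)
    (hhalf : ∀ m : ℕ, |ε m| ≤ 1 / 2)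
    (n : ℕ) (hsmall : ∀ i ≤ d, |ε (n + i)| < δ) :
    ∑ i ∈ Finset.range (d + 1), a i * A (n + i) = 0 := by
  set T : ℝ := ((|∑ i ∈ Finset.range (d + 1), a i| : ℤ) : ℝ) with hT
  set L : ℝ := ∑ i ∈ Finset.range (d + 1), ((|a i| : ℤ) : ℝ) with hL
  have hLpos : 0 < L := by
    rw [hL]
    apply Finset.sum_pos'
    · intro i _; positivity
    · exact ⟨d, Finset.self_mem_range_succ d, by exact_mod_cast abs_pos.mpr had⟩
  -- key: sum of a_i ξ α^{n+i} = 0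
  have key : ∑ i ∈ Finset.range (d + 1), (a i : ℝ) * (ξ * α ^ (n + i)) = 0 := by
    have : ∀ i ∈ Finset.range (d + 1),
        (a i : ℝ) * (ξ * α ^ (n + i)) = ξ * α ^ n * ((a i : ℝ) * α ^ i) := by
      intro i _; rw [pow_add]; ring
    rw [Finset.sum_congr rfl this, ← Finset.mul_sum, hroot, mul_zero]
  have hSr : (((∑ i ∈ Finset.range (d + 1), a i * A (n + i) : ℤ) : ℝ))
      = -(η * (∑ i ∈ Finset.range (d + 1), (a i : ℝ)))
        - ∑ i ∈ Finset.range (d + 1), (a i : ℝ) * ε (n + i) := by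
    have := key
    simp_rw [hdecomp] at this
    push_cast
    simp_rw [mul_add] at this
    rw [Finset.sum_add_distrib, Finset.sum_add_distrib] at this
    rw [← Finset.sum_mul] at this
    linarith [this]
  have hE : |∑ i ∈ Finset.range (d + 1), (a i : ℝ) * ε (n + i)| < L * δ := by
    calc |∑ i ∈ Finset.range (d + 1), (a i : ℝ) * ε (n + i)|
        ≤ ∑ i ∈ Finset.range (d + 1), |(a i : ℝ) * ε (n + i)| :=
          Finset.abs_sum_le_sum_abs _ _
      _ < ∑ i ∈ Finset.range (d + 1), ((|a i| : ℤ) : ℝ) * δ := by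
          apply Finset.sum_lt_sum
          · intro i hi
            rw [abs_mul]
            have hi' : i ≤ d := Nat.lt_succ_iff.mp (Finset.mem_range.mp hi)
            have := (hsmall i hi').le
            have : |(a i : ℝ)| = ((|a i| : ℤ) : ℝ) := by push_cast; ring
            rw [this]
            exact mul_le_mul_of_nonneg_left (hsmall i hi').le (by positivity)
          · refine ⟨d, Finset.self_mem_range_succ d, ?_⟩
            rw [abs_mul]
            have : |(a d : ℝ)| = ((|a d| : ℤ) : ℝ) := by push_cast; ring
            rw [this]
            have hpos : (0:ℝ) < ((|a d| : ℤ) : ℝ) := by exact_mod_cast abs_pos.mpr had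
            exact mul_lt_mul_of_pos_left (hsmall d le_rfl) hpos
      _ = L * δ := by rw [hL, ← Finset.sum_mul]
  have hLδ : L * δ = 1 - |η| * T := by
    rw [hδ, mul_div_cancel₀ _ (ne_of_gt hLpos)]
  have hηT : |η * (∑ i ∈ Finset.range (d + 1), (a i : ℝ))| ≤ |η| * T := by
    rw [abs_mul, hT]
    push_cast
    exact le_of_eq rfl
  have habs : |((∑ i ∈ Finset.range (d + 1), a i * A (n + i) : ℤ) : ℝ)| < 1 := by
    rw [hSr]
    calc |-(η * (∑ i ∈ Finset.range (d + 1), (a i : ℝ)))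
          - ∑ i ∈ Finset.range (d + 1), (a i : ℝ) * ε (n + i)|
        ≤ |η * (∑ i ∈ Finset.range (d + 1), (a i : ℝ))|
          + |∑ i ∈ Finset.range (d + 1), (a i : ℝ) * ε (n + i)| := by
          have heq : -(η * (∑ i ∈ Finset.range (d + 1), (a i : ℝ)))
              - ∑ i ∈ Finset.range (d + 1), (a i : ℝ) * ε (n + i)
              = -((η * (∑ i ∈ Finset.range (d + 1), (a i : ℝ)))
                + ∑ i ∈ Finset.range (d + 1), (a i : ℝ) * ε (n + i)) := by ring
          rw [heq, abs_neg]
          exact abs_add_le _ _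
      _ < |η| * T + L * δ := by
          have := hηT; linarith [hE]
      _ = 1 := by rw [hLδ]; ring
  have h2 : |∑ i ∈ Finset.range (d + 1), a i * A (n + i)| < 1 := by exact_mod_cast habs
  obtain ⟨h3, h4⟩ := abs_lt.mp h2
  omega
end

section
/- Let μ be a Borel probability measure on ℝ, α > 1 and ξ ∈ [1, α] real, and suppose there are constants C > 0 and C₀ ∈ ℕ such that |μ̂(u)| ≤ exp(−C⁻¹ Σ_{j=1}^{k−1} ‖ξ α^j‖²) whenever u > 0 is large, where k ≍ log u. If moreover there exist δ ∈ (0, 1/2) and c > 0 (depending only on α) with #{1 ≤ j ≤ M : ‖ξα^j‖ ≥ δ} ≥ c·log M for all M ≥ 2 and all ξ ∈ [1, α], then |μ̂(u)| ≤ (log u)^{−γ} for all sufficiently large u, where γ = C⁻¹·c'·δ² for some constant c' > 0 depending only on α. -/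
open MeasureTheory

/-- Distance from a real number to its nearest integer. -/
noncomputable def nearestIntDist (x : ℝ) : ℝ := |x - round x|

/-- The Fourier transform `μ̂(u) = ∫ exp(2πiut) dμ(t)` of a measure on `ℝ`. -/
noncomputable def muFourier (μ : Measure ℝ) (u : ℝ) : ℂ :=
  ∫ t : ℝ, Complex.exp (2 * Real.pi * Complex.I * u * t) ∂μ

/-- if `|μ̂(u)| ≤ exp(−C⁻¹ Σ_{j=1}^{k−1} ‖ξ α^j‖²)` for large `u` with
`k ≍ log u`, and `#{1 ≤ j ≤ M : ‖ξ' α^j‖ ≥ δ} ≥ c log M` uniformly over `ξ' ∈ [1,α]`,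
then `|μ̂(u)| ≤ (log u)^{−γ}` for large `u`, with `γ = C⁻¹ c' δ²`. -/
theorem fourier_log_decay_from_count (μ : Measure ℝ) [IsProbabilityMeasure μ]
    (α ξ : ℝ) (hα : 1 < α) (hξ1 : 1 ≤ ξ) (hξα : ξ ≤ α) (C : ℝ) (hC : 0 < C)
    (hbound : ∃ u₀ c₁ c₂ : ℝ, 0 < c₁ ∧ c₁ ≤ c₂ ∧ ∀ u : ℝ, u₀ ≤ u →
      ∃ k : ℕ, c₁ * Real.log u ≤ (k : ℝ) ∧ (k : ℝ) ≤ c₂ * Real.log u ∧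
        ‖muFourier μ u‖ ≤
          Real.exp (-C⁻¹ * ∑ j ∈ Finset.Icc 1 (k - 1), nearestIntDist (ξ * α ^ j) ^ 2))
    (δ c : ℝ) (hδ : δ ∈ Set.Ioo (0 : ℝ) (1 / 2)) (hc : 0 < c)
    (hcount : ∀ M : ℕ, 2 ≤ M → ∀ ξ' : ℝ, 1 ≤ ξ' → ξ' ≤ α →
      c * Real.log M ≤
        ({j : ℕ | 1 ≤ j ∧ j ≤ M ∧ δ ≤ nearestIntDist (ξ' * α ^ j)}.ncard : ℝ)) :
    ∃ c' > 0, ∃ u₁ : ℝ, ∀ u : ℝ, u₁ ≤ u →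
      ‖muFourier μ u‖ ≤ Real.log u ^ (-(C⁻¹ * c' * δ ^ 2)) := by

  obtain ⟨u₀, c₁, c₂, hc₁, hc₁₂, hbnd⟩ := hbound
  obtain ⟨hδ0, hδhalf⟩ := hδ
  set L : ℝ := max (-2 * Real.log (c₁ / 2)) 0 + 1 with hLdef
  clear_value L
  have hL1 : 1 ≤ L := by
    have := le_max_right (-2 * Real.log (c₁ / 2)) (0 : ℝ)
    rw [hLdef]; linarith
  refine ⟨c / 2, by positivity,
    max u₀ (max (Real.exp (3 / c₁)) (Real.exp (Real.exp L))), fun u hu => ?_⟩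
  have hu₀ : u₀ ≤ u := le_trans (le_max_left _ _) hu
  have hu3 : Real.exp (3 / c₁) ≤ u :=
    le_trans (le_trans (le_max_left _ _) (le_max_right _ _)) hu
  have huL : Real.exp (Real.exp L) ≤ u :=
    le_trans (le_trans (le_max_right _ _) (le_max_right _ _)) hu
  have hupos : 0 < u := lt_of_lt_of_le (Real.exp_pos _) hu3
  have hlog3 : 3 / c₁ ≤ Real.log u := (Real.le_log_iff_exp_le hupos).mpr hu3
  have hlogL : Real.exp L ≤ Real.log u := (Real.le_log_iff_exp_le hupos).mpr huL
  have hlogpos : 0 < Real.log u := lt_of_lt_of_le (Real.exp_pos _) hlogL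
  have hloglogL : L ≤ Real.log (Real.log u) := (Real.le_log_iff_exp_le hlogpos).mpr hlogL
  have hloglogpos : 0 < Real.log (Real.log u) := lt_of_lt_of_le (by linarith) hloglogL
  obtain ⟨k, hk₁, hk₂, hk₃⟩ := hbnd u hu₀
  have hk3r : (3 : ℝ) ≤ (k : ℝ) := by
    refine le_trans ?_ hk₁
    have : c₁ * (3 / c₁) ≤ c₁ * Real.log u := by
      exact mul_le_mul_of_nonneg_left hlog3 hc₁.le
    rw [mul_div_cancel₀ _ (ne_of_gt hc₁)] at this
    exact this
  have hk3 : 3 ≤ k := by exact_mod_cast hk3r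
  have hkcast : ((k - 1 : ℕ) : ℝ) = (k : ℝ) - 1 := by
    have : 1 ≤ k := by omega
    push_cast [this]; ring
  -- sum lower bound via the count
  set T : Finset ℕ := (Finset.Icc 1 (k - 1)).filter
      (fun j => δ ≤ nearestIntDist (ξ * α ^ j)) with hTdef
  have hSset : {j : ℕ | 1 ≤ j ∧ j ≤ k - 1 ∧ δ ≤ nearestIntDist (ξ * α ^ j)} = ↑T := by
    ext j
    simp [hTdef, Finset.mem_filter, Finset.mem_Icc, and_assoc]
  have hcnt := hcount (k - 1) (by omega) ξ hξ1 hξα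
  rw [hSset, Set.ncard_coe_finset] at hcnt
  have hsum1 : (T.card : ℝ) * δ ^ 2 ≤
      ∑ j ∈ T, nearestIntDist (ξ * α ^ j) ^ 2 := by
    calc (T.card : ℝ) * δ ^ 2 = ∑ _j ∈ T, δ ^ 2 := by
          rw [Finset.sum_const, nsmul_eq_mul]
      _ ≤ _ := by
          refine Finset.sum_le_sum fun j hj => ?_
          have hjmem : δ ≤ nearestIntDist (ξ * α ^ j) := (Finset.mem_filter.mp hj).2
          exact pow_le_pow_left₀ hδ0.le hjmem 2
  have hsum2 : ∑ j ∈ T, nearestIntDist (ξ * α ^ j) ^ 2 ≤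
      ∑ j ∈ Finset.Icc 1 (k - 1), nearestIntDist (ξ * α ^ j) ^ 2 := by
    refine Finset.sum_le_sum_of_subset_of_nonneg (Finset.filter_subset _ _)
      fun j _ _ => by positivity
  have hsum : c * Real.log ((k : ℝ) - 1) * δ ^ 2 ≤
      ∑ j ∈ Finset.Icc 1 (k - 1), nearestIntDist (ξ * α ^ j) ^ 2 := by
    rw [← hkcast]
    calc c * Real.log ((k - 1 : ℕ) : ℝ) * δ ^ 2 ≤ (T.card : ℝ) * δ ^ 2 := by
          exact mul_le_mul_of_nonneg_right hcnt (by positivity)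
      _ ≤ _ := le_trans hsum1 hsum2
  -- k - 1 ≥ (c₁/2) log u and log (k-1) ≥ (1/2) log log u
  have hc₁log : 3 ≤ c₁ * Real.log u := by
    have := mul_le_mul_of_nonneg_left hlog3 hc₁.le
    rwa [mul_div_cancel₀ _ (ne_of_gt hc₁)] at this
  have hkm1 : c₁ * Real.log u / 2 ≤ (k : ℝ) - 1 := by linarith
  have hkm1pos : (0 : ℝ) < c₁ * Real.log u / 2 := by linarith
  have hlogkm1 : Real.log (c₁ / 2) + Real.log (Real.log u) ≤ Real.log ((k : ℝ) - 1) := by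
    have h1 : Real.log (c₁ * Real.log u / 2) ≤ Real.log ((k : ℝ) - 1) :=
      Real.log_le_log hkm1pos hkm1
    have h2 : c₁ * Real.log u / 2 = (c₁ / 2) * Real.log u := by ring
    rw [h2, Real.log_mul (by positivity) (ne_of_gt hlogpos)] at h1
    exact h1
  have hhalf : Real.log (Real.log u) / 2 ≤ Real.log ((k : ℝ) - 1) := by
    have hmax : -2 * Real.log (c₁ / 2) ≤ L - 1 := by
      have := le_max_left (-2 * Real.log (c₁ / 2)) (0 : ℝ)
      rw [hLdef]; linarith
    linarith
  have hloglognn : 0 ≤ Real.log ((k:ℝ) - 1) := le_trans (by positivity) hhalf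
  -- conclude
  refine le_trans hk₃ ?_
  rw [Real.rpow_def_of_pos hlogpos]
  apply Real.exp_le_exp.mpr
  have hfinal : c * (Real.log (Real.log u) / 2) * δ ^ 2 ≤
      ∑ j ∈ Finset.Icc 1 (k - 1), nearestIntDist (ξ * α ^ j) ^ 2 := by
    refine le_trans ?_ hsum
    have := mul_le_mul_of_nonneg_left hhalf hc.le
    nlinarith [sq_nonneg δ, hδ0]
  have hCinv : 0 < C⁻¹ := by positivity
  calc -C⁻¹ * ∑ j ∈ Finset.Icc 1 (k - 1), nearestIntDist (ξ * α ^ j) ^ 2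
      ≤ -C⁻¹ * (c * (Real.log (Real.log u) / 2) * δ ^ 2) := by
        have := mul_le_mul_of_nonneg_left hfinal hCinv.le
        linarith
    _ = Real.log (Real.log u) * -(C⁻¹ * (c / 2) * δ ^ 2) := by ring
end
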